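/- Let M be a symmetric irreducible r×r 0–1 transition matrix and let A : Σ̂_M → ℝ be Lipschitz continuous. Then for every Lipschitz function φ on Σ_M, the function G⁺_A(φ) is Lipschitz with Lipschitz constant Lip(G⁺_A(φ)) ≤ ‖A‖₀ + Lip(A). -/
import Mathlib


open MeasureTheory Filter Topology Real

/-- The one-sided subshift of finite type defined by the 0-1 transition matrix `M`:
sequences `x : ℕ → Fin r` with `M (x j) (x (j+1)) = 1` for all `j`. -/
abbrev Shift (r : ℕ) (M : Fin r → Fin r → Bool) : Type :=
  {x : ℕ → Fin r // ∀ j : ℕ, M (x j) (x (j + 1)) = true}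

variable {r : ℕ} {M : Fin r → Fin r → Bool}

/-- The matrix `M` is irreducible: any symbol can be joined to any other by an
admissible path of positive length. -/
def Irred (M : Fin r → Fin r → Bool) : Prop :=
  ∀ i j : Fin r, ∃ n : ℕ, ∃ w : Fin (n + 2) → Fin r,
    w 0 = i ∧ w (Fin.last (n + 1)) = j ∧
    ∀ k : Fin (n + 1), M (w k.castSucc) (w k.succ) = true

/-- The left shift map on the subshift. -/
def shiftMap (x : Shift r M) : Shift r M :=
  ⟨fun j => x.1 (j + 1), fun j => x.2 (j + 1)⟩

/-- The metric `d(x,y) = Λ^k`, `k = min { j : x_j ≠ y_j }`, `d(x,x) = 0`. -/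
noncomputable def shiftDist (Λ : ℝ) (x y : Shift r M) : ℝ :=
  letI := Classical.decEq (Shift r M)
  if h : x = y then 0
  else Λ ^ Nat.find (show ∃ j : ℕ, x.1 j ≠ y.1 j by
    by_contra hc
    push_neg at hc
    exact h (Subtype.ext (funext hc)))

/-- `φ` is Lipschitz with constant `K` for the metric `shiftDist Λ`. -/
def LipBnd (Λ K : ℝ) (φ : Shift r M → ℝ) : Prop :=
  ∀ x y : Shift r M, |φ x - φ y| ≤ K * shiftDist Λ x y

/-- `φ` is Lipschitz continuous for the metric `shiftDist Λ`. -/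
def IsLip (Λ : ℝ) (φ : Shift r M → ℝ) : Prop :=
  ∃ K : ℝ, LipBnd Λ K φ

/-- The best Lipschitz constant of `φ`. -/
noncomputable def lipC (Λ : ℝ) (φ : Shift r M → ℝ) : ℝ :=
  sInf {K : ℝ | 0 ≤ K ∧ LipBnd Λ K φ}

/-- The uniform norm `‖φ‖₀`. -/
noncomputable def unorm (φ : Shift r M → ℝ) : ℝ :=
  ⨆ x : Shift r M, |φ x|

/-- An observable on the natural extension `Σ̂_M ⊂ Σ*_M × Σ_M` (with `Σ*_M`
canonically identified with `Σ_M`), as a function of `(y, x)`; it is Lipschitz with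
constant `K` for the max-metric. -/
def LipBnd2 (Λ K : ℝ) (A : Shift r M → Shift r M → ℝ) : Prop :=
  ∀ y x y' x' : Shift r M,
    |A y x - A y' x'| ≤ K * max (shiftDist Λ y y') (shiftDist Λ x x')

/-- `A` is Lipschitz continuous on `Σ̂_M`. -/
def IsLip2 (Λ : ℝ) (A : Shift r M → Shift r M → ℝ) : Prop :=
  ∃ K : ℝ, LipBnd2 Λ K A

/-- The best Lipschitz constant of the observable `A`. -/
noncomputable def lipC2 (Λ : ℝ) (A : Shift r M → Shift r M → ℝ) : ℝ :=
  sInf {K : ℝ | 0 ≤ K ∧ LipBnd2 Λ K A}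

/-- The uniform norm `‖A‖₀` of the observable. -/
noncomputable def unorm2 (A : Shift r M → Shift r M → ℝ) : ℝ :=
  ⨆ p : Shift r M × Shift r M, |A p.1 p.2|

/-- `μ` is a `σ`-invariant Borel probability measure on the subshift. -/
def InvProb (μ : Measure (Shift r M)) : Prop :=
  IsProbabilityMeasure μ ∧ μ.map shiftMap = μ

/-- Entropy of the cylinder partition of length `n`:
`H_n(μ) = - ∑_{|w| = n} μ([w]) log μ([w])`. -/
noncomputable def cylEnt (μ : Measure (Shift r M)) (n : ℕ) : ℝ :=
  ∑ w : Fin n → Fin r,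
    Real.negMulLog ((μ {x : Shift r M | ∀ i : Fin n, x.1 i.1 = w i}).toReal)

/-- The Kolmogorov–Sinai entropy `h_μ(σ)` of an invariant measure on the subshift:
since the cylinder partition is generating and `n ↦ H_n(μ)` is subadditive,
`h_μ(σ) = lim_n H_n(μ)/n = inf_n H_n(μ)/n`. -/
noncomputable def entropy (μ : Measure (Shift r M)) : ℝ :=
  ⨅ n : ℕ, cylEnt μ (n + 1) / (n + 1)

/-- The operator
`G⁺_A(φ)(y) = sup_{μ ∈ M_σ} [ ∫ (A(y,x) + φ(x)) dμ(x) + h_μ(σ) ]`. -/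
noncomputable def Gplus (A : Shift r M → Shift r M → ℝ)
    (φ : Shift r M → ℝ) (y : Shift r M) : ℝ :=
  sSup {t : ℝ | ∃ μ : Measure (Shift r M), InvProb μ ∧
    t = ∫ x, (A y x + φ x) ∂μ + entropy μ}

/-- The maximal ergodic average `max_{μ ∈ M_σ} ∫ B dμ`. -/
noncomputable def maxErg (B : Shift r M → ℝ) : ℝ :=
  sSup {t : ℝ | ∃ μ : Measure (Shift r M), InvProb μ ∧ t = ∫ x, B x ∂μ}

/-- The quotient norm on functions modulo additive constants:
`‖g‖_c = inf_{γ ∈ ℝ} ‖g + γ‖₀`. -/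
noncomputable def cnorm (g : Shift r M → ℝ) : ℝ :=
  ⨅ γ : ℝ, unorm (fun x => g x + γ)

section Helpers

lemma shiftDist_nonneg {Λ : ℝ} (hΛ : 0 < Λ) (x y : Shift r M) : 0 ≤ shiftDist Λ x y := by
  unfold shiftDist
  split_ifs with h
  · exact le_refl _
  · positivity

lemma shiftDist_self {Λ : ℝ} (x : Shift r M) : shiftDist Λ x x = 0 := by
  unfold shiftDist
  simp

lemma shiftDist_symm (Λ : ℝ) (x y : Shift r M) : shiftDist Λ x y = shiftDist Λ y x := by
  unfold shiftDist
  by_cases h : x = y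
  · subst h; simp
  · rw [dif_neg h, dif_neg (Ne.symm h)]
    congr 1
    exact le_antisymm (Nat.find_mono fun n hn => hn.symm) (Nat.find_mono fun n hn => hn.symm)

lemma shiftDist_le_pow {Λ : ℝ} (h0 : 0 < Λ) (h1 : Λ ≤ 1) {x y : Shift r M} {n : ℕ}
    (h : ∀ i, i < n → x.1 i = y.1 i) : shiftDist Λ x y ≤ Λ ^ n := by
  unfold shiftDist
  split_ifs with he
  · positivity
  · apply pow_le_pow_of_le_one h0.le h1
    rw [Nat.le_find_iff]
    intro m hm hne
    exact hne (h m hm)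

lemma shiftDist_le_one {Λ : ℝ} (h0 : 0 < Λ) (h1 : Λ ≤ 1) (x y : Shift r M) :
    shiftDist Λ x y ≤ 1 := by
  simpa using shiftDist_le_pow h0 h1 (x := x) (y := y) (n := 0) (by intro i hi; omega)

lemma lipC2_spec {Λ : ℝ} (hΛ0 : 0 < Λ) {A : Shift r M → Shift r M → ℝ}
    (hA : IsLip2 Λ A) : 0 ≤ lipC2 Λ A ∧ LipBnd2 Λ (lipC2 Λ A) A := by
  obtain ⟨K, hK⟩ := hA
  have hmaxd : ∀ y y' x x' : Shift r M,
      0 ≤ max (shiftDist Λ y y') (shiftDist Λ x x') := fun y y' x x' =>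
    le_max_of_le_left (shiftDist_nonneg hΛ0 _ _)
  have hne : Set.Nonempty {K : ℝ | 0 ≤ K ∧ LipBnd2 Λ K A} := by
    refine ⟨max K 0, le_max_right _ _, fun y x y' x' => (hK y x y' x').trans ?_⟩
    exact mul_le_mul_of_nonneg_right (le_max_left _ _) (hmaxd _ _ _ _)
  have hbb : BddBelow {K : ℝ | 0 ≤ K ∧ LipBnd2 Λ K A} := ⟨0, fun K hK => hK.1⟩
  have h0 : 0 ≤ lipC2 Λ A := le_csInf hne fun K hK => hK.1
  refine ⟨h0, fun y x y' x' => ?_⟩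
  set m := max (shiftDist Λ y y') (shiftDist Λ x x') with hm
  have hm0 : 0 ≤ m := hmaxd _ _ _ _
  rcases eq_or_lt_of_le hm0 with h | h
  · obtain ⟨K', hK'⟩ := hne
    have := hK'.2 y x y' x'
    rw [← hm, ← h, mul_zero] at this
    rw [← h, mul_zero]
    exact this
  · rw [← div_le_iff₀ h]
    exact le_csInf hne fun K' hK' => (div_le_iff₀ h).mpr (hK'.2 y x y' x')

instance : OpensMeasurableSpace (Shift r M) := Subtype.opensMeasurableSpace _

lemma lip_continuous {Λ K : ℝ} (h0 : 0 < Λ) (h1 : Λ < 1) {f : Shift r M → ℝ}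
    (hf : LipBnd Λ K f) : Continuous f := by
  rw [continuous_iff_continuousAt]
  intro x
  rw [ContinuousAt, Metric.tendsto_nhds]
  intro ε hε
  obtain ⟨n, hn⟩ : ∃ n, max K 0 * Λ ^ n < ε := by
    have hto : Filter.Tendsto (fun n => max K 0 * Λ ^ n) Filter.atTop (nhds 0) := by
      simpa using (tendsto_pow_atTop_nhds_zero_of_lt_one h0.le h1).const_mul (max K 0)
    exact (hto.eventually (gt_mem_nhds hε)).exists
  have hopen : IsOpen {z : Shift r M | ∀ i, i < n → z.1 i = x.1 i} := by
    have heq : {z : Shift r M | ∀ i, i < n → z.1 i = x.1 i} =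
        ⋂ i ∈ Finset.range n, {z : Shift r M | z.1 i = x.1 i} := by
      ext z; simp [Set.mem_iInter]
    rw [heq]
    apply isOpen_biInter_finset
    intro i _
    have hc : Continuous fun z : Shift r M => z.1 i :=
      (continuous_apply i).comp continuous_subtype_val
    exact hc.isOpen_preimage ({x.1 i} : Set (Fin r)) (isOpen_discrete _)
  have hU : {z : Shift r M | ∀ i, i < n → z.1 i = x.1 i} ∈ nhds x :=
    hopen.mem_nhds (fun i _ => rfl)
  filter_upwards [hU] with z hz
  calc dist (f z) (f x) = |f z - f x| := Real.dist_eq _ _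
    _ ≤ K * shiftDist Λ z x := hf z x
    _ ≤ max K 0 * (Λ ^ n) := by
        apply mul_le_mul (le_max_left _ _) (shiftDist_le_pow h0 h1.le hz)
          (shiftDist_nonneg h0 _ _) (le_max_right _ _)
    _ < ε := hn

lemma lip_abs_bound {Λ K : ℝ} (h0 : 0 < Λ) (h1 : Λ < 1) {f : Shift r M → ℝ}
    (hf : LipBnd Λ K f) (x₀ x : Shift r M) : |f x| ≤ |f x₀| + max K 0 := by
  have h2 := hf x x₀
  have h3 : K * shiftDist Λ x x₀ ≤ max K 0 * 1 :=
    mul_le_mul (le_max_left _ _) (shiftDist_le_one h0 h1.le _ _)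
      (shiftDist_nonneg h0 _ _) (le_max_right _ _)
  have := abs_sub_abs_le_abs_sub (f x) (f x₀)
  nlinarith [abs_nonneg (f x)]

lemma nonempty_of_prob (μ : Measure (Shift r M)) [IsProbabilityMeasure μ] :
    Nonempty (Shift r M) := by
  by_contra h
  rw [not_nonempty_iff] at h
  have h1 : (μ Set.univ) = 1 := measure_univ
  rw [Set.univ_eq_empty_iff.mpr h, measure_empty] at h1
  exact zero_ne_one h1

lemma lip_integrable {Λ K : ℝ} (h0 : 0 < Λ) (h1 : Λ < 1) {f : Shift r M → ℝ}
    (hf : LipBnd Λ K f) (μ : Measure (Shift r M)) [IsProbabilityMeasure μ] :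
    Integrable f μ := by
  have hne : Nonempty (Shift r M) := nonempty_of_prob μ
  obtain ⟨x₀⟩ := hne
  refine Integrable.mono' (integrable_const (|f x₀| + max K 0))
    ((lip_continuous h0 h1 hf).measurable.aestronglyMeasurable) ?_
  exact Filter.Eventually.of_forall fun x => by
    rw [Real.norm_eq_abs]; exact lip_abs_bound h0 h1 hf x₀ x

lemma integral_abs_le {f : Shift r M → ℝ} {C : ℝ} (μ : Measure (Shift r M))
    [IsProbabilityMeasure μ] (h : ∀ x, |f x| ≤ C) : |∫ x, f x ∂μ| ≤ C := by
  have := norm_integral_le_of_norm_le_const (μ := μ) (f := f) (C := C)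
    (Filter.Eventually.of_forall fun x => by rw [Real.norm_eq_abs]; exact h x)
  simpa [Real.norm_eq_abs] using this

lemma negMulLog_le_one {p : ℝ} (h0 : 0 ≤ p) (h1 : p ≤ 1) : Real.negMulLog p ≤ 1 := by
  rcases eq_or_lt_of_le h0 with h | h
  · simp [← h]
  · have hl := Real.log_le_sub_one_of_pos (inv_pos.mpr h)
    rw [Real.log_inv] at hl
    have h2 := mul_le_mul_of_nonneg_left hl h0
    have hp : p * p⁻¹ = 1 := mul_inv_cancel₀ (ne_of_gt h)
    rw [Real.negMulLog]
    nlinarith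

lemma measure_toReal_le_one (μ : Measure (Shift r M)) [IsProbabilityMeasure μ]
    (s : Set (Shift r M)) : (μ s).toReal ≤ 1 := by
  have h1 : μ s ≤ 1 := prob_le_one
  have := ENNReal.toReal_mono ENNReal.one_ne_top h1
  simpa using this

lemma cylEnt_nonneg (μ : Measure (Shift r M)) [IsProbabilityMeasure μ] (n : ℕ) :
    0 ≤ cylEnt μ n := by
  apply Finset.sum_nonneg
  intro w _
  exact Real.negMulLog_nonneg ENNReal.toReal_nonneg (measure_toReal_le_one μ _)

lemma entropy_le_card (μ : Measure (Shift r M)) [IsProbabilityMeasure μ] :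
    entropy μ ≤ (Fintype.card (Fin 1 → Fin r) : ℝ) := by
  have hbb : BddBelow (Set.range fun n : ℕ => cylEnt μ (n + 1) / (n + 1)) := by
    refine ⟨0, ?_⟩
    rintro t ⟨n, rfl⟩
    exact div_nonneg (cylEnt_nonneg μ _) (by positivity)
  have h0 : entropy μ ≤ cylEnt μ 1 / 1 := by
    have := ciInf_le hbb 0
    simpa [entropy] using this
  have h1 : cylEnt μ 1 ≤ (Fintype.card (Fin 1 → Fin r) : ℝ) := by
    unfold cylEnt
    calc (∑ w : Fin 1 → Fin r,
          Real.negMulLog ((μ {x : Shift r M | ∀ i : Fin 1, x.1 i.1 = w i}).toReal))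
        ≤ ∑ _w : Fin 1 → Fin r, (1 : ℝ) := by
          apply Finset.sum_le_sum
          intro w _
          exact negMulLog_le_one ENNReal.toReal_nonneg (measure_toReal_le_one μ _)
      _ = (Fintype.card (Fin 1 → Fin r) : ℝ) := by
          simp [Finset.sum_const]
  rw [div_one] at h0
  exact h0.trans h1

end Helpers

/-- For a symmetric irreducible transition matrix `M` and a Lipschitz
observable `A` on the natural extension, for every Lipschitz `φ` on `Σ_M` the function
`G⁺_A(φ)` is Lipschitz with `Lip(G⁺_A(φ)) ≤ ‖A‖₀ + Lip(A)`. -/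
theorem Gplus_lipschitz_bound
    (r : ℕ) (hr : 2 ≤ r) (M : Fin r → Fin r → Bool)
    (hSym : ∀ i j, M i j = M j i) (hIrr : Irred M)
    (Λ : ℝ) (hΛ : Λ ∈ Set.Ioo (0 : ℝ) 1)
    (A : Shift r M → Shift r M → ℝ) (hA : IsLip2 Λ A) :
    ∀ φ : Shift r M → ℝ, IsLip Λ φ →
      LipBnd Λ (unorm2 A + lipC2 Λ A) (Gplus A φ) ∧
      lipC Λ (Gplus A φ) ≤ unorm2 A + lipC2 Λ A := by
  intro φ hφ
  obtain ⟨hΛ0, hΛ1⟩ := hΛ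
  obtain ⟨hL0, hLlip⟩ := lipC2_spec hΛ0 hA
  have hU0 : (0:ℝ) ≤ unorm2 A := Real.iSup_nonneg fun p => abs_nonneg _
  have oneside : ∀ y y' : Shift r M,
      Gplus A φ y ≤ Gplus A φ y' + lipC2 Λ A * shiftDist Λ y y' := by
    intro y y'
    by_cases hex : ∃ μ : Measure (Shift r M), InvProb μ
    · obtain ⟨μ₀, hμ₀⟩ := hex
      haveI := hμ₀.1
      obtain ⟨x₀⟩ := nonempty_of_prob (M := M) μ₀
      obtain ⟨Kφ, hKφ⟩ := hφ
      -- Lipschitz bound for the integrand at any fixed first coordinate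
      have hlipz : ∀ z : Shift r M,
          LipBnd Λ (lipC2 Λ A + max Kφ 0) (fun x => A z x + φ x) := by
        intro z x x'
        have h1 := hLlip z x z x'
        rw [shiftDist_self, max_eq_right (shiftDist_nonneg hΛ0 x x')] at h1
        have h2 := hKφ x x'
        have hd := shiftDist_nonneg hΛ0 x x'
        have he : (A z x + φ x) - (A z x' + φ x') = (A z x - A z x') + (φ x - φ x') := by
          ring
        rw [he]
        calc |(A z x - A z x') + (φ x - φ x')|
            ≤ |A z x - A z x'| + |φ x - φ x'| := abs_add_le _ _
          _ ≤ lipC2 Λ A * shiftDist Λ x x' + Kφ * shiftDist Λ x x' := add_le_add h1 h2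
          _ ≤ (lipC2 Λ A + max Kφ 0) * shiftDist Λ x x' := by
              nlinarith [le_max_left Kφ (0:ℝ), le_max_right Kφ (0:ℝ)]
      have hint : ∀ (z : Shift r M) (μ : Measure (Shift r M)), InvProb μ →
          Integrable (fun x => A z x + φ x) μ := by
        intro z μ hμ
        haveI := hμ.1
        exact lip_integrable hΛ0 hΛ1 (hlipz z) μ
      -- Bounded above
      have hbdd : ∀ z : Shift r M, BddAbove {t : ℝ | ∃ μ : Measure (Shift r M),
          InvProb μ ∧ t = ∫ x, (A z x + φ x) ∂μ + entropy μ} := by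
        intro z
        refine ⟨(|A z x₀ + φ x₀| + max (lipC2 Λ A + max Kφ 0) 0) +
          (Fintype.card (Fin 1 → Fin r) : ℝ), ?_⟩
        rintro t ⟨μ, hμ, rfl⟩
        haveI := hμ.1
        refine add_le_add ?_ (entropy_le_card μ)
        exact le_trans (le_abs_self _)
          (integral_abs_le μ fun x => lip_abs_bound hΛ0 hΛ1 (hlipz z) x₀ x)
      -- main comparison
      unfold Gplus
      refine csSup_le ⟨∫ x, (A y x + φ x) ∂μ₀ + entropy μ₀, ⟨μ₀, hμ₀, rfl⟩⟩ ?_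
      rintro t ⟨μ, hμ, rfl⟩
      haveI := hμ.1
      have hle : ∫ x, (A y' x + φ x) ∂μ + entropy μ ≤
          sSup {t : ℝ | ∃ μ : Measure (Shift r M),
            InvProb μ ∧ t = ∫ x, (A y' x + φ x) ∂μ + entropy μ} :=
        le_csSup (hbdd y') ⟨μ, hμ, rfl⟩
      have hdiff : ∫ x, (A y x + φ x) ∂μ - ∫ x, (A y' x + φ x) ∂μ ≤
          lipC2 Λ A * shiftDist Λ y y' := by
        rw [← integral_sub (hint y μ hμ) (hint y' μ hμ)]
        have hpt : ∀ x, |(A y x + φ x) - (A y' x + φ x)| ≤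
            lipC2 Λ A * shiftDist Λ y y' := by
          intro x
          have h1 := hLlip y x y' x
          rw [shiftDist_self, max_eq_left (shiftDist_nonneg hΛ0 y y')] at h1
          have he : (A y x + φ x) - (A y' x + φ x) = A y x - A y' x := by ring
          rw [he]
          exact h1
        exact le_trans (le_abs_self _) (integral_abs_le μ hpt)
      linarith
    · have hempty : ∀ z : Shift r M, {t : ℝ | ∃ μ : Measure (Shift r M),
          InvProb μ ∧ t = ∫ x, (A z x + φ x) ∂μ + entropy μ} = ∅ := by
        intro z
        rw [Set.eq_empty_iff_forall_notMem]
        rintro t ⟨μ, hμ, -⟩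
        exact hex ⟨μ, hμ⟩
      unfold Gplus
      rw [hempty y, hempty y', Real.sSup_empty]
      have := mul_nonneg hL0 (shiftDist_nonneg hΛ0 y y')
      linarith
  have key : LipBnd Λ (lipC2 Λ A) (Gplus A φ) := by
    intro x y
    have h1 := oneside x y
    have h2 := oneside y x
    rw [shiftDist_symm Λ y x] at h2
    rw [abs_sub_le_iff]
    constructor <;> linarith
  constructor
  · intro x y
    exact (key x y).trans (mul_le_mul_of_nonneg_right (by linarith)
      (shiftDist_nonneg hΛ0 x y))
  · apply csInf_le ⟨0, fun K hK => hK.1⟩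
    refine ⟨by linarith, fun x y => ?_⟩
    exact (key x y).trans (mul_le_mul_of_nonneg_right (by linarith)
      (shiftDist_nonneg hΛ0 x y))
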